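/- Let F_1 ∈ ℂ^{n×n} be the top-left n×n block of a unitary U ∈ U(r) (n ≤ r). Then the time-energy cost max_k |arg λ_k(U)| is at least arccos(σ_min(F_1)), the arccosine of the smallest singular value of F_1. -/

import Mathlib

open Matrix
open scoped ComplexOrder

lemma aux_sum_castLE {M : Type*} [AddCommMonoid M] {n r : ℕ} (h : n ≤ r)
    (g : Fin r → M) (hg : ∀ j : Fin r, ¬ (j : ℕ) < n → g j = 0) :
    ∑ j, g j = ∑ j : Fin n, g (Fin.castLE h j) := by
  classical
  have h2 : ∑ j : Fin n, g (Fin.castLE h j) = ∑ j ∈ Finset.univ.map (Fin.castLEEmb h), g j := by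
    rw [Finset.sum_map]; rfl
  rw [h2]
  refine (Finset.sum_subset (Finset.subset_univ _) ?_).symm
  intro j _ hj
  refine hg j fun hlt => hj ?_
  simp only [Finset.mem_map, Finset.mem_univ, true_and, Fin.castLEEmb_apply]
  exact ⟨⟨(j : ℕ), hlt⟩, by ext; simp⟩

lemma aux_arccos_le_arccos {x y : ℝ} (hxy : x ≤ y) : Real.arccos y ≤ Real.arccos x := by
  simp only [Real.arccos]
  have := Real.monotone_arcsin hxy
  linarith

/-- For a unitary `U` and a unit vector `v`, there is an eigenvalue `μ` of `U`
(on the unit circle) with `re μ ≤ re ⟨v, U v⟩`. -/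
lemma aux_exists_eigenvalue_re_le {r : ℕ} (hr : 0 < r) {U : Matrix (Fin r) (Fin r) ℂ}
    (hU : U ∈ Matrix.unitaryGroup (Fin r) ℂ) (v : Fin r → ℂ) (hv : star v ⬝ᵥ v = 1) :
    ∃ μ ∈ spectrum ℂ U, ‖μ‖ = 1 ∧ μ.re ≤ (star v ⬝ᵥ (U *ᵥ v)).re := by
  classical
  haveI hNe : Nonempty (Fin r) := Fin.pos_iff_nonempty.mp hr
  have hU1 : U * Uᴴ = 1 := by
    simpa [Matrix.star_eq_conjTranspose] using (Matrix.mem_unitaryGroup_iff).mp hU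
  have hU1' : Uᴴ * U = 1 := by
    simpa [Matrix.star_eq_conjTranspose] using (Matrix.mem_unitaryGroup_iff').mp hU
  set H : Matrix (Fin r) (Fin r) ℂ := (2⁻¹ : ℂ) • (U + Uᴴ) with hHdef
  have hH : H.IsHermitian := by
    unfold Matrix.IsHermitian
    rw [hHdef, Matrix.conjTranspose_smul, Matrix.conjTranspose_add,
      Matrix.conjTranspose_conjTranspose]
    rw [add_comm]
    congr 1
    simp [Complex.ext_iff]
  obtain ⟨i₁, hi₁⟩ := Finite.exists_min hH.eigenvalues
  set lam := hH.eigenvalues i₁ with hlamdef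
  set lamc : ℂ := (lam : ℂ) with hlamcdef
  -- positive semidefiniteness of H - lam • 1
  set V : Matrix (Fin r) (Fin r) ℂ := (hH.eigenvectorUnitary : Matrix (Fin r) (Fin r) ℂ) with hV
  have hVV : V * Vᴴ = 1 := by
    simpa [Matrix.star_eq_conjTranspose] using
      (Matrix.mem_unitaryGroup_iff).mp (hH.eigenvectorUnitary).2
  have hPS : (H - lamc • 1).PosSemidef := by
    have hdiag : Matrix.PosSemidef
        (Matrix.diagonal (fun i => ((hH.eigenvalues i - lam : ℝ) : ℂ))) := by
      rw [Matrix.posSemidef_diagonal_iff]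
      intro i
      rw [Complex.zero_le_real]
      exact sub_nonneg.mpr (hi₁ i)
    have hconj := hdiag.mul_mul_conjTranspose_same V
    have heq : V * (Matrix.diagonal (fun i => ((hH.eigenvalues i - lam : ℝ) : ℂ))) * Vᴴ
        = H - lamc • 1 := by
      have hd : Matrix.diagonal (fun i => ((hH.eigenvalues i - lam : ℝ) : ℂ))
          = Matrix.diagonal (Complex.ofReal ∘ hH.eigenvalues) - lamc • 1 := by
        rw [Matrix.smul_one_eq_diagonal]
        ext i j
        by_cases hij : i = j
        · subst hij
          simp only [Matrix.diagonal_apply_eq, Matrix.sub_apply, Function.comp_apply, hlamcdef]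
          push_cast
          ring
        · simp [Matrix.sub_apply, Matrix.diagonal_apply_ne _ hij]
      rw [hd, Matrix.mul_sub, Matrix.sub_mul]
      congr 1
      · exact (hH.spectral_theorem).symm
      · rw [Matrix.mul_smul, Matrix.smul_mul, Matrix.mul_one, hVV]
    rwa [heq] at hconj
  -- Rayleigh bound : lam ≤ re ⟨v, H v⟩
  have hRay : lam ≤ (star v ⬝ᵥ (H *ᵥ v)).re := by
    have h0 := hPS.re_dotProduct_nonneg v
    have hcalc : star v ⬝ᵥ ((H - lamc • 1) *ᵥ v) = star v ⬝ᵥ (H *ᵥ v) - lamc := by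
      rw [Matrix.sub_mulVec, dotProduct_sub]
      congr 1
      rw [Matrix.smul_mulVec, Matrix.one_mulVec, dotProduct_smul, hv,
        smul_eq_mul, mul_one]
    rw [hcalc] at h0
    simp only [RCLike.re] at h0
    simpa [Complex.sub_re, hlamcdef, sub_nonneg] using h0
  -- re ⟨v, H v⟩ = re ⟨v, U v⟩
  have hconjdot : star v ⬝ᵥ (Uᴴ *ᵥ v) = star (star v ⬝ᵥ (U *ᵥ v)) := by
    rw [Matrix.dotProduct_mulVec, ← Matrix.star_mulVec, Matrix.star_dotProduct]
  have hreH : (star v ⬝ᵥ (H *ᵥ v)).re = (star v ⬝ᵥ (U *ᵥ v)).re := by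
    rw [hHdef, Matrix.smul_mulVec, Matrix.add_mulVec, dotProduct_smul,
      dotProduct_add, hconjdot]
    set z := star v ⬝ᵥ (U *ᵥ v)
    have : z + star z = (2 * z.re : ℝ) := by
      simpa using Complex.add_conj z
    rw [this]
    simp [Complex.ext_iff]
  -- the eigenspace of H for lam
  have hw₁mem : (⇑(hH.eigenvectorBasis i₁) : Fin r → ℂ)
      ∈ Module.End.eigenspace (Matrix.toLin' H) lamc := by
    rw [Module.End.mem_eigenspace_iff, Matrix.toLin'_apply,
      hH.mulVec_eigenvectorBasis]
    exact RCLike.real_smul_eq_coe_smul (K := ℂ) lam _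
  have hw₁ne : (⇑(hH.eigenvectorBasis i₁) : Fin r → ℂ) ≠ 0 :=
    fun hc => hH.eigenvectorBasis.orthonormal.ne_zero i₁ ((WithLp.ofLp_eq_zero 2).mp hc)
  haveI : Nontrivial (Module.End.eigenspace (Matrix.toLin' H) lamc) :=
    ⟨⟨⟨_, hw₁mem⟩, 0, fun hcon => hw₁ne (by simpa [Submodule.mk_eq_zero] using hcon)⟩⟩
  have hcomm : H * U = U * H := by
    rw [hHdef, Matrix.smul_mul, Matrix.mul_smul, Matrix.add_mul, Matrix.mul_add, hU1, hU1']
  have hinv : ∀ x ∈ Module.End.eigenspace (Matrix.toLin' H) lamc,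
      Matrix.toLin' U x ∈ Module.End.eigenspace (Matrix.toLin' H) lamc := by
    intro x hx
    rw [Module.End.mem_eigenspace_iff] at hx ⊢
    rw [Matrix.toLin'_apply] at hx ⊢
    rw [Matrix.toLin'_apply, Matrix.mulVec_mulVec, hcomm, ← Matrix.mulVec_mulVec, hx,
      Matrix.mulVec_smul]
  obtain ⟨μ, hμ⟩ := Module.End.exists_eigenvalue ((Matrix.toLin' U).restrict hinv)
  obtain ⟨x', hx'⟩ := hμ.exists_hasEigenvector
  set x : Fin r → ℂ := (x' : Fin r → ℂ) with hx
  have hxne : x ≠ 0 := by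
    intro hcon
    exact hx'.2 (by exact_mod_cast Subtype.ext hcon)
  have hUx : U *ᵥ x = μ • x := by
    have h1 := hx'.apply_eq_smul
    have h2 := congrArg (Subtype.val) h1
    simpa [LinearMap.restrict_apply, Matrix.toLin'_apply] using h2
  have hHx : H *ᵥ x = lamc • x := by
    have h1 : x ∈ Module.End.eigenspace (Matrix.toLin' H) lamc := x'.2
    rwa [Module.End.mem_eigenspace_iff, Matrix.toLin'_apply] at h1
  have hxx : star x ⬝ᵥ x ≠ 0 := by
    intro hcon
    exact hxne (dotProduct_star_self_eq_zero.mp hcon)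
  have hμconj : (starRingEnd ℂ) μ * μ = 1 := by
    have h1 : star (U *ᵥ x) ⬝ᵥ (U *ᵥ x) = star x ⬝ᵥ x := by
      rw [Matrix.star_mulVec, ← Matrix.dotProduct_mulVec, Matrix.mulVec_mulVec, hU1',
        Matrix.one_mulVec]
    rw [hUx] at h1
    rw [star_smul, smul_dotProduct, dotProduct_smul] at h1
    have h2 : ((starRingEnd ℂ) μ * μ) * (star x ⬝ᵥ x) = 1 * (star x ⬝ᵥ x) := by
      rw [one_mul, mul_assoc]
      simpa [smul_smul, smul_eq_mul] using h1
    exact mul_right_cancel₀ hxx h2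
  have hμne : μ ≠ 0 := by
    intro hcon
    rw [hcon, mul_zero] at hμconj
    exact zero_ne_one hμconj
  have habs : ‖μ‖ = 1 := by
    have : Complex.normSq μ = 1 := by
      have := hμconj
      rw [mul_comm] at this
      rw [Complex.mul_conj] at this
      exact_mod_cast this
    rw [Complex.norm_def, this, Real.sqrt_one]
  have hμinv : (starRingEnd ℂ) μ = μ⁻¹ := eq_inv_of_mul_eq_one_left hμconj
  have hUHx : Uᴴ *ᵥ x = (starRingEnd ℂ) μ • x := by
    have h1 : Uᴴ *ᵥ (U *ᵥ x) = x := by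
      rw [Matrix.mulVec_mulVec, hU1', Matrix.one_mulVec]
    rw [hUx, Matrix.mulVec_smul] at h1
    calc Uᴴ *ᵥ x = μ⁻¹ • (μ • (Uᴴ *ᵥ x)) := by
          rw [smul_smul, inv_mul_cancel₀ hμne, one_smul]
    _ = μ⁻¹ • x := by rw [h1]
    _ = (starRingEnd ℂ) μ • x := by rw [hμinv]
  have hlameq : lamc = (μ + (starRingEnd ℂ) μ) / 2 := by
    have h1 : H *ᵥ x = ((μ + (starRingEnd ℂ) μ) / 2) • x := by
      rw [hHdef, Matrix.smul_mulVec, Matrix.add_mulVec, hUx, hUHx, ← add_smul,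
        smul_smul]
      congr 1
      ring
    rw [hHx] at h1
    have h2 : (lamc - (μ + (starRingEnd ℂ) μ) / 2) • x = 0 := by
      rw [sub_smul, h1, sub_self]
    rcases smul_eq_zero.mp h2 with h3 | h3
    · exact sub_eq_zero.mp h3
    · exact absurd h3 hxne
  have hre : lam = μ.re := by
    have h4 : (lam : ℂ) = (μ.re : ℂ) := by
      rw [← hlamcdef, hlameq, Complex.add_conj]
      push_cast
      ring
    exact_mod_cast h4
  -- μ ∈ spectrum
  have hμspec : μ ∈ spectrum ℂ U := by
    have hev : Module.End.HasEigenvalue (Matrix.toLin' U) μ :=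
      Module.End.hasEigenvalue_of_hasEigenvector
        ⟨Module.End.mem_eigenspace_iff.mpr (by rw [Matrix.toLin'_apply, hUx]), hxne⟩
    have hmem := Module.End.hasEigenvalue_iff_mem_spectrum.mp hev
    have heqv : Matrix.toLinAlgEquiv' U = Matrix.toLin' U := by
      apply LinearMap.ext
      intro y
      rw [Matrix.toLinAlgEquiv'_apply, Matrix.toLin'_apply]
    rw [← heqv] at hmem
    rwa [AlgEquiv.spectrum_eq] at hmem
  exact ⟨μ, hμspec, habs, by rw [← hre]; exact le_of_le_of_eq hRay hreH⟩

/-- If `F₁` is the top-left `n × n` block of a unitary `U ∈ U(r)`, then some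
eigenvalue `μ` of `U` satisfies `|arg μ| ≥ arccos (σ_min F₁)`; i.e. the
time-energy cost of `U` is at least `arccos` of the smallest singular value
of `F₁`. -/
theorem cost_ge_arccos_sigmaMin {n r : ℕ} (hn : 0 < n) (h : n ≤ r)
    (U : Matrix (Fin r) (Fin r) ℂ) (hU : U ∈ Matrix.unitaryGroup (Fin r) ℂ)
    (F₁ : Matrix (Fin n) (Fin n) ℂ)
    (hF₁ : F₁ = Matrix.of fun i j : Fin n => U (Fin.castLE h i) (Fin.castLE h j)) :
    ∃ μ ∈ spectrum ℂ U,
      Real.arccos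
          (Real.sqrt (⨅ i, (Matrix.isHermitian_conjTranspose_mul_self F₁).eigenvalues i)) ≤
        |Complex.arg μ| := by
  classical
  haveI hNe : Nonempty (Fin n) := Fin.pos_iff_nonempty.mp hn
  set hG := Matrix.isHermitian_conjTranspose_mul_self F₁ with hGdef
  obtain ⟨i₀, hi₀⟩ := exists_eq_ciInf_of_finite (f := hG.eigenvalues)
  set t := hG.eigenvalues i₀ with htdef
  set w : Fin n → ℂ := ⇑(hG.eigenvectorBasis i₀) with hw
  have hGw : (F₁ᴴ * F₁) *ᵥ w = t • w := hG.mulVec_eigenvectorBasis i₀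
  have hww : star w ⬝ᵥ w = 1 := by
    have h1 := inner_self_eq_norm_sq_to_K (𝕜 := ℂ) (hG.eigenvectorBasis i₀)
    rw [hG.eigenvectorBasis.orthonormal.1 i₀] at h1
    have h2 : (inner ℂ (hG.eigenvectorBasis i₀) (hG.eigenvectorBasis i₀) : ℂ)
        = star w ⬝ᵥ w := by
      rw [PiLp.inner_apply]
      simp [PiLp.inner_apply, RCLike.inner_apply, dotProduct, hw, mul_comm, Complex.mul_conj']
    rw [h2] at h1
    rw [h1]
    norm_num
  -- the squared norm of F₁ w is t
  have key : star (F₁ *ᵥ w) ⬝ᵥ (F₁ *ᵥ w) = (t : ℂ) := by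
    calc star (F₁ *ᵥ w) ⬝ᵥ (F₁ *ᵥ w) = (star w ᵥ* F₁ᴴ) ⬝ᵥ (F₁ *ᵥ w) := by
          rw [Matrix.star_mulVec]
    _ = star w ⬝ᵥ (F₁ᴴ *ᵥ (F₁ *ᵥ w)) := (Matrix.dotProduct_mulVec _ _ _).symm
    _ = star w ⬝ᵥ ((F₁ᴴ * F₁) *ᵥ w) := by rw [Matrix.mulVec_mulVec]
    _ = star w ⬝ᵥ (t • w) := by rw [hGw]
    _ = (t : ℂ) * (star w ⬝ᵥ w) := by
          rw [dotProduct_smul]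
          rw [Complex.real_smul]
    _ = (t : ℂ) := by rw [hww, mul_one]
  -- Cauchy-Schwarz : re ⟨w, F₁ w⟩ ≤ √t
  set y : EuclideanSpace ℂ (Fin n) := (WithLp.equiv 2 _).symm (F₁ *ᵥ w) with hy
  have hinnyy : (inner ℂ y y : ℂ) = (t : ℂ) := by
    have : (inner ℂ y y : ℂ) = star (F₁ *ᵥ w) ⬝ᵥ (F₁ *ᵥ w) := by
      rw [PiLp.inner_apply]
      simp [PiLp.inner_apply, RCLike.inner_apply, dotProduct, hy, mul_comm, Complex.mul_conj']
    rw [this, key]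
  have hnormy : ‖y‖ = Real.sqrt t := by
    rw [@norm_eq_sqrt_re_inner ℂ]
    congr 1
    rw [hinnyy]
    simp
  have hCS : (star w ⬝ᵥ (F₁ *ᵥ w)).re ≤ Real.sqrt t := by
    have h1 : star w ⬝ᵥ (F₁ *ᵥ w) = (inner ℂ (hG.eigenvectorBasis i₀) y : ℂ) := by
      simp [PiLp.inner_apply, RCLike.inner_apply, dotProduct, hw, hy, mul_comm]
    rw [h1]
    calc (inner ℂ (hG.eigenvectorBasis i₀) y : ℂ).re
        ≤ ‖(inner ℂ (hG.eigenvectorBasis i₀) y : ℂ)‖ := Complex.re_le_norm _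
    _ = ‖(inner ℂ (hG.eigenvectorBasis i₀) y : ℂ)‖ := rfl
    _ ≤ ‖hG.eigenvectorBasis i₀‖ * ‖y‖ := norm_inner_le_norm _ _
    _ = Real.sqrt t := by rw [hG.eigenvectorBasis.orthonormal.1 i₀, hnormy, one_mul]
  -- the extended vector v
  set v : Fin r → ℂ := fun j => if hj : (j : ℕ) < n then w ⟨j, hj⟩ else 0 with hv
  have hvz : ∀ j : Fin r, ¬ (j : ℕ) < n → v j = 0 := by
    intro j hj
    simp [hv, hj]
  have hvcast : ∀ i : Fin n, v (Fin.castLE h i) = w i := by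
    intro i
    have : ((Fin.castLE h i : Fin r) : ℕ) < n := by simpa using i.2
    simp only [hv, this, dif_pos]
    congr 1
  have hvv : star v ⬝ᵥ v = 1 := by
    unfold dotProduct
    simp only [Pi.star_apply]
    rw [aux_sum_castLE h (fun j => star (v j) * v j)
      (fun j hj => by simp [hvz j hj])]
    rw [← hww]
    unfold dotProduct
    simp only [Pi.star_apply]
    exact Finset.sum_congr rfl fun i _ => by rw [hvcast i]
  have hvUv : star v ⬝ᵥ (U *ᵥ v) = star w ⬝ᵥ (F₁ *ᵥ w) := by
    have hmul : ∀ i : Fin n, (U *ᵥ v) (Fin.castLE h i) = (F₁ *ᵥ w) i := by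
      intro i
      show ∑ j, U (Fin.castLE h i) j * v j = ∑ j, F₁ i j * w j
      rw [aux_sum_castLE h (fun j => U (Fin.castLE h i) j * v j)
        (fun j hj => by simp [hvz j hj])]
      refine Finset.sum_congr rfl fun j _ => ?_
      rw [hvcast j, hF₁]
      rfl
    unfold dotProduct
    simp only [Pi.star_apply]
    rw [aux_sum_castLE h (fun j => star (v j) * (U *ᵥ v) j)
      (fun j hj => by simp [hvz j hj])]
    refine Finset.sum_congr rfl fun i _ => ?_
    rw [hvcast i, hmul i]
  -- apply the eigenvalue lemma
  obtain ⟨μ, hμspec, habs, hre⟩ :=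
    aux_exists_eigenvalue_re_le (lt_of_lt_of_le hn h) hU v hvv
  refine ⟨μ, hμspec, ?_⟩
  have hμne : μ ≠ 0 := by
    intro hc
    rw [hc] at habs
    simp at habs
  have harg : Real.arccos μ.re = |Complex.arg μ| := by
    rw [← Real.arccos_cos (abs_nonneg _) (Complex.abs_arg_le_pi μ)]
    congr 1
    rw [Real.cos_abs, Complex.cos_arg hμne, habs, div_one]
  rw [← hi₀, ← harg]
  refine aux_arccos_le_arccos ?_
  calc μ.re ≤ (star v ⬝ᵥ (U *ᵥ v)).re := hre
  _ = (star w ⬝ᵥ (F₁ *ᵥ w)).re := by rw [hvUv]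
  _ ≤ Real.sqrt t := hCS
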